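/- arXiv:1111.4233 — 2 statements merged into one kernel-verified Lean document; each statement's English description precedes it below -/
import Mathlib

section
/- Let (U_n)_{n≥1} be an i.i.d. sequence with values in a set E, let {E_1,…,E_m} be a partition of E, and let X be a Poisson random variable of parameter λ independent of (U_n). For i = 1,…,m set X_i = #{ n ≤ X : U_n ∈ E_i }. Then X_1,…,X_m are independent Poisson random variables with E[X_i] = λ · P(U_1 ∈ E_i). -/
open MeasureTheory ProbabilityTheory Finset Nat
open scoped NNReal ENNReal

section aux

lemma exists_perm_comp' {α ι : Type*} [Fintype α] [DecidableEq α] [Fintype ι] [DecidableEq ι]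
    (c c' : α → ι)
    (h : ∀ i, (univ.filter fun a => c a = i).card = (univ.filter fun a => c' a = i).card) :
    ∃ g : Equiv.Perm α, c' ∘ g = c := by
  have hcard : ∀ i, Fintype.card {a // c a = i} = Fintype.card {a // c' a = i} := by
    intro i; rw [Fintype.card_subtype, Fintype.card_subtype, h]
  refine ⟨((Equiv.sigmaFiberEquiv c).symm.trans
    (Equiv.sigmaCongrRight fun i => Fintype.equivOfCardEq (hcard i))).trans
      (Equiv.sigmaFiberEquiv c'), funext fun a => ?_⟩
  exact ((Fintype.equivOfCardEq (hcard (c a))) ⟨a, rfl⟩).2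

lemma card_fiber_count' {N m : ℕ} (k : Fin m → ℕ) (hk : ∑ i, k i = N) :
    ((univ : Finset (Fin N → Fin m)).filter
      (fun c => ∀ i, (univ.filter fun n => c n = i).card = k i)).card
      = Nat.multinomial univ k := by
  classical
  have hcs : Fintype.card (Σ i, Fin (k i)) = N := by
    simp [Fintype.card_sigma, hk]
  let e := Fintype.equivFinOfCardEq hcs
  set f0 : Fin N → Fin m := fun n => (e.symm n).1 with hf0
  have hf0fib : ∀ i, (univ.filter fun n => f0 n = i).card = k i := by
    intro i
    rw [Finset.card_equiv e.symm (t := univ.filter fun x : Σ i, Fin (k i) => x.1 = i)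
      (fun n => by simp [f0])]
    simp only [Finset.card_filter]
    rw [← Finset.univ_sigma_univ, Finset.sum_sigma]
    simp [apply_ite Finset.card, Finset.sum_ite_eq']
  set S := ((univ : Finset (Fin N → Fin m)).filter
      (fun c => ∀ i, (univ.filter fun n => c n = i).card = k i)) with hS
  have hmem : ∀ g : Equiv.Perm (Fin N), (f0 ∘ g) ∈ S := by
    intro g
    simp only [hS, mem_filter, mem_univ, true_and]
    intro i
    rw [Finset.card_equiv g (t := univ.filter fun n => f0 n = i) (fun n => by simp)]
    exact hf0fib i
  have key : (univ : Finset (Equiv.Perm (Fin N))).card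
      = ∑ c ∈ S, (univ.filter fun g : Equiv.Perm (Fin N) => f0 ∘ ⇑g = c).card := by
    exact Finset.card_eq_sum_card_fiberwise (f := fun g : Equiv.Perm (Fin N) => f0 ∘ ⇑g)
      (fun g _ => hmem g)
  have hfib : ∀ c ∈ S, (univ.filter fun g : Equiv.Perm (Fin N) => f0 ∘ ⇑g = c).card
      = ∏ i, (k i)! := by
    intro c hc
    simp only [hS, mem_filter, mem_univ, true_and] at hc
    obtain ⟨g0, hg0⟩ := exists_perm_comp' c f0 (fun i => by rw [hc, hf0fib])
    have hiff : ∀ g : Equiv.Perm (Fin N), f0 ∘ g = f0 ↔ f0 ∘ ⇑(g * g0) = c := by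
      intro g
      constructor
      · intro h
        funext a
        have h1 := congrFun h (g0 a)
        have h2 := congrFun hg0 a
        simp only [Function.comp_apply, Equiv.Perm.mul_apply] at h1 h2 ⊢
        rw [h1, h2]
      · intro h
        funext a
        have h1 := congrFun h (g0⁻¹ a)
        have h2 := congrFun hg0 (g0⁻¹ a)
        simp only [Function.comp_apply, Equiv.Perm.mul_apply, Equiv.Perm.coe_inv, Equiv.apply_symm_apply] at h1 h2
        simp only [Function.comp_apply]
        rw [h1, h2]
    have : (univ.filter fun g : Equiv.Perm (Fin N) => f0 ∘ ⇑g = c).card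
        = Fintype.card {g : Equiv.Perm (Fin N) // f0 ∘ g = f0} := by
      rw [← Fintype.card_subtype]
      exact (Fintype.card_congr (Equiv.subtypeEquiv (Equiv.mulRight g0) hiff)).symm
    rw [this, DomMulAct.stabilizer_card]
    exact Finset.prod_congr rfl fun i _ => by rw [Fintype.card_subtype, hf0fib]
  rw [Finset.sum_congr rfl hfib, Finset.sum_const, smul_eq_mul] at key
  have hcu : (univ : Finset (Equiv.Perm (Fin N))).card = N ! := by
    simp [Finset.card_univ, Fintype.card_perm]
  have hspec := Nat.multinomial_spec (univ : Finset (Fin m)) k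
  rw [hk] at hspec
  have hpos : 0 < ∏ i, (k i)! := Finset.prod_pos fun i _ => Nat.factorial_pos _
  have h2 : S.card * ∏ i, (k i)! = (∏ i, (k i)!) * Nat.multinomial univ k := by
    rw [hspec, ← hcu, key]
  rw [mul_comm] at h2
  exact Nat.eq_of_mul_eq_mul_left hpos h2

end aux

/-- Lemma `lem-obvious`, Poisson thinning: if `(U_n)` is an i.i.d.
sequence with values in `E`, `E_1, …, E_m` is a partition of `E`, and `X` is a Poisson
random variable of parameter `λ` independent of `(U_n)`, then the counts
`X_i = #{n ≤ X : U_n ∈ E_i}` are independent Poisson random variables with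
`E[X_i] = λ · P(U_1 ∈ E_i)`. -/
theorem poisson_thinning
    {Ω : Type*} [MeasurableSpace Ω] (P : Measure Ω) [IsProbabilityMeasure P]
    {E : Type*} [MeasurableSpace E] (m : ℕ) (Es : Fin m → Set E)
    (hEmeas : ∀ i, MeasurableSet (Es i))
    (hEdisj : Pairwise (Function.onFun Disjoint Es))
    (hEcover : (⋃ i, Es i) = Set.univ)
    (U : ℕ → Ω → E) (hUmeas : ∀ n, Measurable (U n))
    (hUindep : iIndepFun U P)
    (hUident : ∀ n, IdentDistrib (U n) (U 0) P P)
    (lam : ℝ≥0) (X : Ω → ℕ) (hXmeas : Measurable X)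
    (hXpoisson : Measure.map X P = poissonMeasure lam)
    (hXindep : IndepFun X (fun ω => fun n => U n ω) P) :
    iIndepFun
      (fun (i : Fin m) ω => ({n | n < X ω ∧ U n ω ∈ Es i}.ncard)) P ∧
    ∀ i : Fin m,
      Measure.map (fun ω => ({n | n < X ω ∧ U n ω ∈ Es i}.ncard)) P =
        poissonMeasure (lam * (P (U 0 ⁻¹' Es i)).toNNReal) := by
  classical
  -- the classifier
  have hex : ∀ e : E, ∃ i, e ∈ Es i := fun e => Set.mem_iUnion.1 (hEcover ▸ Set.mem_univ e)
  set cls : E → Fin m := fun e => (hex e).choose with hclsdef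
  have hcls_mem : ∀ e, e ∈ Es (cls e) := fun e => (hex e).choose_spec
  have hcls : ∀ e (i : Fin m), e ∈ Es i ↔ cls e = i := by
    intro e i
    refine ⟨fun h => ?_, fun h => h ▸ hcls_mem e⟩
    by_contra hne
    exact Set.disjoint_left.1 (hEdisj hne) (hcls_mem e) h
  -- counting function on sequences
  set cnt : ℕ → Fin m → (ℕ → E) → ℕ :=
    fun N i u => ((Finset.range N).filter (fun n => u n ∈ Es i)).card with hcntdef
  have hcnt_meas : ∀ N i, Measurable (cnt N i) := by
    intro N i
    have h1 : cnt N i = fun u => ∑ n ∈ Finset.range N, if u n ∈ Es i then 1 else 0 := by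
      funext u; exact Finset.card_filter _ _
    rw [h1]
    exact Finset.measurable_sum _ (fun n _ =>
      Measurable.ite (measurable_pi_apply n (hEmeas i)) measurable_const measurable_const)
  set T : Ω → (ℕ → E) := fun ω n => U n ω with hTdef
  have hTmeas : Measurable T := measurable_pi_lambda _ hUmeas
  set Y : Fin m → Ω → ℕ := fun i ω => ({n | n < X ω ∧ U n ω ∈ Es i}).ncard with hYdef
  have hYeq : ∀ i ω, Y i ω = cnt (X ω) i (T ω) := by
    intro i ω
    simp only [hYdef, hcntdef, hTdef]
    rw [← Set.ncard_coe_finset]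
    congr 1
    ext n
    simp [Finset.mem_filter, Finset.mem_range, and_comm]
  have hYmeas : ∀ i, Measurable (Y i) := by
    intro i
    apply measurable_to_countable'
    intro c
    have h1 : Y i ⁻¹' {c} = ⋃ N : ℕ, (X ⁻¹' {N}) ∩ ((fun ω => cnt N i (T ω)) ⁻¹' {c}) := by
      ext ω
      simp only [Set.mem_preimage, Set.mem_singleton_iff, Set.mem_iUnion, Set.mem_inter_iff]
      constructor
      · intro h; exact ⟨X ω, rfl, by rw [← hYeq]; exact h⟩
      · rintro ⟨N, hN, h⟩; rw [hYeq, hN]; exact h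
    rw [h1]
    exact MeasurableSet.iUnion fun N =>
      (hXmeas (measurableSet_singleton N)).inter
        (((hcnt_meas N i).comp hTmeas) (measurableSet_singleton c))
  -- the probabilities
  set p : Fin m → ℝ≥0∞ := fun i => P (U 0 ⁻¹' Es i) with hpdef
  have hpne : ∀ i, p i ≠ ⊤ := fun i => (lt_of_le_of_lt prob_le_one ENNReal.one_lt_top).ne
  set q : Fin m → ℝ≥0 := fun i => (p i).toNNReal with hqdef
  have hpq : ∀ i, (q i : ℝ≥0∞) = p i := fun i => ENNReal.coe_toNNReal (hpne i)
  have hpsum : ∑ i, p i = 1 := by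
    have h1 : (⋃ i, U 0 ⁻¹' Es i) = Set.univ := by
      rw [← Set.preimage_iUnion, hEcover, Set.preimage_univ]
    have h2 := measure_iUnion (μ := P)
      (fun i j hij => (hEdisj hij).preimage (U 0))
      (fun i => (hUmeas 0) (hEmeas i))
    rw [h1, measure_univ, tsum_fintype] at h2
    exact h2.symm
  have hqsum : ∑ i, (q i : ℝ) = 1 := by
    have h1 : ((∑ i, q i : ℝ≥0) : ℝ≥0∞) = 1 := by
      push_cast
      simp only [hpq]
      exact hpsum
    have h2 : (∑ i, q i : ℝ≥0) = 1 := by exact_mod_cast h1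
    exact_mod_cast congrArg (fun x : ℝ≥0 => (x : ℝ)) h2
  have hpUn : ∀ n i, P (U n ⁻¹' Es i) = p i := fun n i =>
    (hUident n).measure_mem_eq (hEmeas i)
  -- X is the sum of the counts
  have hXsum : ∀ ω, X ω = ∑ i, Y i ω := by
    intro ω
    have h1 : (Finset.range (X ω)).card
        = ∑ i, ((Finset.range (X ω)).filter (fun n => cls (U n ω) = i)).card :=
      Finset.card_eq_sum_card_fiberwise (fun n _ => Finset.mem_univ _)
    rw [Finset.card_range] at h1
    rw [h1]
    refine Finset.sum_congr rfl fun i _ => ?_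
    rw [hYeq]
    simp only [hcntdef, hTdef]
    congr 1
    exact Finset.filter_congr fun n _ => by rw [hcls]
  have hevent : ∀ k : Fin m → ℕ,
      {ω | ∀ i, Y i ω = k i}
        = (X ⁻¹' {∑ i, k i}) ∩ (T ⁻¹' {u | ∀ i, cnt (∑ i, k i) i u = k i}) := by
    intro k
    ext ω
    simp only [Set.mem_setOf_eq, Set.mem_inter_iff, Set.mem_preimage, Set.mem_singleton_iff]
    constructor
    · intro h
      have hX : X ω = ∑ i, k i := by
        rw [hXsum ω]; exact Finset.sum_congr rfl (fun i _ => h i)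
      refine ⟨hX, fun i => ?_⟩
      rw [← hX, ← hYeq]; exact h i
    · rintro ⟨hX, h⟩ i
      rw [hYeq, hX]; exact h i
  have hMB : ∀ (N : ℕ) (k : Fin m → ℕ), MeasurableSet {u : ℕ → E | ∀ i, cnt N i u = k i} := by
    intro N k
    have h1 : {u : ℕ → E | ∀ i, cnt N i u = k i} = ⋂ i, (cnt N i) ⁻¹' {k i} := by
      ext u; simp
    rw [h1]
    exact MeasurableSet.iInter fun i => (hcnt_meas N i) (measurableSet_singleton _)
  have hXval : ∀ N : ℕ, P (X ⁻¹' {N}) = ENNReal.ofReal (poissonPMFReal lam N) := by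
    intro N
    rw [← Measure.map_apply hXmeas (measurableSet_singleton N), hXpoisson,
      poissonMeasure_singleton]
    rfl
  -- key fact about membership
  have hkey : ∀ (x : E) (j i : Fin m), x ∈ Es j → (x ∈ Es i ↔ j = i) := by
    intro x j i hx
    exact ⟨fun h => ((hcls x j).1 hx).symm.trans ((hcls x i).1 h), fun h => h ▸ hx⟩
  have hpath : ∀ (N : ℕ) (k : Fin m → ℕ), (∑ i, k i = N) →
      P (T ⁻¹' {u | ∀ i, cnt N i u = k i})
        = (Nat.multinomial Finset.univ k : ℝ≥0∞) * ∏ i, p i ^ (k i) := by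
    intro N k hk
    have hdecomp : T ⁻¹' {u | ∀ i, cnt N i u = k i}
        = ⋃ c : {c : Fin N → Fin m // ∀ i, (Finset.univ.filter fun n => c n = i).card = k i},
            ⋂ n : Fin N, (U n ⁻¹' Es (c.1 n)) := by
      ext ω
      simp only [Set.mem_preimage, Set.mem_setOf_eq, Set.mem_iUnion, Set.mem_iInter]
      constructor
      · intro h
        refine ⟨⟨fun n => cls (U n ω), fun i => ?_⟩, fun n => hcls_mem _⟩
        rw [← h i]
        simp only [hcntdef, hTdef]
        rw [Finset.card_filter, Finset.card_filter,
          ← Fin.sum_univ_eq_sum_range (fun n => if U n ω ∈ Es i then 1 else 0) N]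
        exact Finset.sum_congr rfl fun n _ => by simp [hcls]
      · rintro ⟨c, h⟩ i
        rw [← c.2 i]
        simp only [hcntdef, hTdef]
        rw [Finset.card_filter, Finset.card_filter,
          ← Fin.sum_univ_eq_sum_range (fun n => if U n ω ∈ Es i then 1 else 0) N]
        refine Finset.sum_congr rfl fun n _ => ?_
        congr 1
        exact propext (hkey _ _ _ (h n)) ▸ rfl
    have hdisj2 : Pairwise (Function.onFun Disjoint
        fun c : {c : Fin N → Fin m // ∀ i, (Finset.univ.filter fun n => c n = i).card = k i} =>
          ⋂ n : Fin N, (U n ⁻¹' Es (c.1 n))) := by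
      intro c c' hcc
      have hne : ∃ n, c.1 n ≠ c'.1 n := by
        by_contra hno; push_neg at hno
        exact hcc (Subtype.ext (funext hno))
      obtain ⟨n, hn⟩ := hne
      refine Set.disjoint_left.2 fun ω h1 h2 => ?_
      have e1 := Set.mem_iInter.1 h1 n
      have e2 := Set.mem_iInter.1 h2 n
      exact hn (((hcls _ _).1 e1).symm.trans ((hcls _ _).1 e2))
    have hpiece : ∀ c : {c : Fin N → Fin m // ∀ i, (Finset.univ.filter fun n => c n = i).card = k i},
        P (⋂ n : Fin N, (U n ⁻¹' Es (c.1 n))) = ∏ i, p i ^ (k i) := by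
      intro c
      set sets : ℕ → Set E := fun n => if h : n < N then Es (c.1 ⟨n, h⟩) else Set.univ with hsets
      have hseteq : (⋂ n : Fin N, (U n ⁻¹' Es (c.1 n))) = ⋂ n ∈ Finset.range N, U n ⁻¹' sets n := by
        ext ω
        simp only [Set.mem_iInter, Finset.mem_range, Set.mem_preimage]
        constructor
        · intro h n hn
          simp only [hsets, dif_pos hn]
          exact h ⟨n, hn⟩
        · intro h n
          have h2 := h n.1 n.isLt
          simp only [hsets, dif_pos n.isLt, Fin.eta] at h2
          exact h2
      rw [hseteq, hUindep.measure_inter_preimage_eq_mul (Finset.range N) (sets := sets)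
        (fun n hn => by
          simp only [hsets]
          split_ifs with h
          · exact hEmeas _
          · exact MeasurableSet.univ)]
      rw [← Fin.prod_univ_eq_prod_range (fun n => P (U n ⁻¹' sets n)) N]
      have h3 : ∀ n : Fin N, P (U n.1 ⁻¹' sets n.1) = p (c.1 n) := by
        intro n
        simp only [hsets, dif_pos n.isLt, Fin.eta]
        exact hpUn _ _
      rw [Finset.prod_congr rfl (fun n _ => h3 n)]
      rw [← Finset.prod_fiberwise_of_maps_to (g := c.1) (t := Finset.univ)
        (fun n _ => Finset.mem_univ _) (fun n => p (c.1 n))]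
      refine Finset.prod_congr rfl fun i _ => ?_
      calc ∏ n ∈ Finset.univ.filter fun n => c.1 n = i, p (c.1 n)
          = ∏ n ∈ Finset.univ.filter fun n => c.1 n = i, p i :=
            Finset.prod_congr rfl fun n hn => by rw [(Finset.mem_filter.1 hn).2]
        _ = p i ^ (k i) := by rw [Finset.prod_const, c.2 i]
    rw [hdecomp, measure_iUnion hdisj2
      (fun c => MeasurableSet.iInter fun n => (hUmeas n) (hEmeas _)), tsum_fintype]
    rw [Finset.sum_congr rfl (fun c _ => hpiece c), Finset.sum_const, nsmul_eq_mul]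
    congr 1
    have hcard : Fintype.card
        {c : Fin N → Fin m // ∀ i, (Finset.univ.filter fun n => c n = i).card = k i}
        = Nat.multinomial Finset.univ k := by
      rw [Fintype.card_subtype]
      exact card_fiber_count' k hk
    rw [Finset.card_univ, hcard]
  -- the scalar identity
  have hscalar : ∀ k : Fin m → ℕ,
      ENNReal.ofReal (poissonPMFReal lam (∑ i, k i))
          * ((Nat.multinomial Finset.univ k : ℝ≥0∞) * ∏ i, p i ^ (k i))
        = ∏ i, ENNReal.ofReal (poissonPMFReal (lam * q i) (k i)) := by
    intro k
    have hq0 : ∀ i, (0:ℝ) ≤ (q i : ℝ) := fun i => (q i).2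
    have hspecR : ((∑ i, k i)! : ℝ)
        = ((∏ i, (k i)! : ℕ) : ℝ) * ((Nat.multinomial Finset.univ k : ℕ) : ℝ) := by
      exact_mod_cast congrArg (Nat.cast (R := ℝ)) (Nat.multinomial_spec Finset.univ k).symm
    have hKne : ((∏ i, (k i)! : ℕ) : ℝ) ≠ 0 :=
      Nat.cast_ne_zero.2 (Finset.prod_pos fun i _ => Nat.factorial_pos _).ne'
    have hMne : ((Nat.multinomial Finset.univ k : ℕ) : ℝ) ≠ 0 :=
      Nat.cast_ne_zero.2 (Nat.multinomial_pos _ _).ne'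
    have hreal : poissonPMFReal lam (∑ i, k i)
          * ((Nat.multinomial Finset.univ k : ℝ) * ∏ i, (q i : ℝ) ^ (k i))
        = ∏ i, poissonPMFReal (lam * q i) (k i) := by
      simp only [poissonPMFReal, NNReal.coe_mul]
      rw [Finset.prod_div_distrib, Finset.prod_mul_distrib, ← Real.exp_sum]
      have he : ∑ i, -((lam : ℝ) * (q i : ℝ)) = -(lam : ℝ) := by
        rw [Finset.sum_neg_distrib, ← Finset.mul_sum, hqsum, mul_one]
      rw [he]
      simp only [mul_pow]
      rw [Finset.prod_mul_distrib, Finset.prod_pow_eq_pow_sum]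
      rw [← Nat.cast_prod]
      rw [hspecR]
      field_simp
    have h1 : ∀ i, p i ^ (k i) = ENNReal.ofReal ((q i : ℝ) ^ (k i)) := by
      intro i
      rw [← hpq i, ← ENNReal.coe_pow, ← ENNReal.ofReal_coe_nnreal]
      norm_cast
    rw [Finset.prod_congr rfl (fun i _ => h1 i),
      ← ENNReal.ofReal_prod_of_nonneg (fun i _ => pow_nonneg (hq0 i) _),
      ← ENNReal.ofReal_natCast (Nat.multinomial Finset.univ k),
      ← ENNReal.ofReal_mul (Nat.cast_nonneg _),
      ← ENNReal.ofReal_mul poissonPMFReal_nonneg,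
      ← ENNReal.ofReal_prod_of_nonneg (fun i _ => poissonPMFReal_nonneg)]
    exact congrArg ENNReal.ofReal hreal
  -- the joint distribution
  have hjoint : ∀ k : Fin m → ℕ,
      P {ω | ∀ i, Y i ω = k i}
        = ∏ i, ENNReal.ofReal (poissonPMFReal (lam * q i) (k i)) := by
    intro k
    rw [hevent k, hXindep.measure_inter_preimage_eq_mul _ _ (measurableSet_singleton _) (hMB _ k),
      hXval, hpath _ k rfl, hscalar k]
  have hsingle : ∀ (r : ℝ≥0) (n : ℕ),
      poissonMeasure r {n} = ENNReal.ofReal (poissonPMFReal r n) := by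
    intro r n
    rw [poissonMeasure_singleton]
    rfl
  set J : Ω → (Fin m → ℕ) := fun ω i => Y i ω with hJdef
  have hJmeas : Measurable J := measurable_pi_lambda _ hYmeas
  have hmap : Measure.map J P = Measure.pi (fun i => poissonMeasure (lam * q i)) := by
    refine Measure.ext_of_singleton fun k => ?_
    rw [Measure.map_apply hJmeas (measurableSet_singleton k)]
    have h1 : J ⁻¹' {k} = {ω | ∀ i, Y i ω = k i} := by
      ext ω
      simp [hJdef, funext_iff]
    have h2 : ({k} : Set (Fin m → ℕ)) = Set.pi Set.univ (fun i => {k i}) := by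
      ext f
      simp [funext_iff, Set.mem_pi]
    rw [h1, hjoint k, h2, Measure.pi_pi]
    exact Finset.prod_congr rfl fun i _ => (hsingle _ _).symm
  have hmarg : ∀ i, Measure.map (Y i) P = poissonMeasure (lam * q i) := by
    intro i
    have hcomp : Y i = (fun f : Fin m → ℕ => f i) ∘ J := rfl
    rw [hcomp, ← Measure.map_map (measurable_pi_apply i) hJmeas, hmap]
    refine Measure.ext_of_singleton fun n => ?_
    rw [Measure.map_apply (measurable_pi_apply i) (measurableSet_singleton n)]
    have h1 : (fun f : Fin m → ℕ => f i) ⁻¹' {n}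
        = Set.pi Set.univ (fun j => if j = i then {n} else Set.univ) := by
      ext f
      simp only [Set.mem_preimage, Set.mem_singleton_iff, Set.mem_pi, Set.mem_univ, true_implies]
      constructor
      · intro h j
        split_ifs with hj
        · subst hj; exact h
        · trivial
      · intro h
        have h2 := h i
        simpa using h2
    rw [h1, Measure.pi_pi]
    have h3 : ∀ j, poissonMeasure (lam * q j) (if j = i then ({n} : Set ℕ) else Set.univ)
        = if j = i then poissonMeasure (lam * q i) {n} else 1 := by
      intro j
      split_ifs with hj
      · subst hj; rfl
      · exact measure_univ
    rw [Finset.prod_congr rfl (fun j _ => h3 j), Finset.prod_ite_eq' Finset.univ i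
      (fun j => poissonMeasure (lam * q i) {n}), if_pos (Finset.mem_univ i)]
  have hqi : ∀ i : Fin m, q i = (P (U 0 ⁻¹' Es i)).toNNReal := fun i => rfl
  constructor
  · rw [iIndepFun_iff_measure_inter_preimage_eq_mul]
    intro Sf sets Hs
    have h1 : (⋂ i ∈ Sf, Y i ⁻¹' sets i) = J ⁻¹' (Set.pi ↑Sf sets) := by
      ext ω
      simp [Set.mem_pi, hJdef]
    have hSm : MeasurableSet (Set.pi (↑Sf : Set (Fin m)) sets) :=
      MeasurableSet.pi (Set.to_countable _) (fun i hi => Hs i hi)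
    rw [h1, ← Measure.map_apply hJmeas hSm, hmap]
    have h2 : Set.pi (↑Sf : Set (Fin m)) sets
        = Set.pi Set.univ (fun i => if i ∈ Sf then sets i else Set.univ) := by
      ext f
      simp only [Set.mem_pi, Set.mem_univ, true_implies, Finset.mem_coe]
      constructor
      · intro h i
        split_ifs with hi
        · exact h i hi
        · trivial
      · intro h i hi
        have h3 := h i
        rw [if_pos hi] at h3
        exact h3
    rw [h2, Measure.pi_pi]
    have h4 : ∀ i, poissonMeasure (lam * q i) (if i ∈ Sf then sets i else Set.univ)
        = if i ∈ Sf then poissonMeasure (lam * q i) (sets i) else 1 := by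
      intro i
      split_ifs with hi
      · rfl
      · exact measure_univ
    rw [Finset.prod_congr rfl (fun i _ => h4 i), Finset.prod_ite_mem Finset.univ Sf
      (fun i => poissonMeasure (lam * q i) (sets i)), Finset.univ_inter]
    refine Finset.prod_congr rfl fun i hi => ?_
    rw [← hmarg i, Measure.map_apply (hYmeas i) (Hs i hi)]
  · intro i
    have : (fun ω => ({n | n < X ω ∧ U n ω ∈ Es i}.ncard)) = Y i := rfl
    rw [this, hmarg i, hqi i]
end

section
/- For every d ≥ 2 there is a constant c = c(d) such that for every z ∈ Z^d \ {0}, every H ≥ 1, and every integer m ≥ cH, the internal DLA cluster A(∅, mδ_z) built from m independent simple random walks all started at z satisfies P( A(∅, mδ_z) ∩ 𝔹^c(0, ‖z‖+H) ≠ ∅ ) ≥ exp( −c H² ). (A scenario realizing this forces ⌈cH⌉ of the walks to settle successively along a nearest-neighbour path of length ≤ cH normal to the sphere of radius ‖z‖ at z, which has probability at least (1/2d)^{1+2+…+⌈cH⌉}.) -/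
open MeasureTheory ProbabilityTheory Filter

noncomputable section

abbrev Zd (d : ℕ) := Fin d → ℤ

/-- Euclidean norm of a lattice point. -/
def eNorm {d : ℕ} (z : Zd d) : ℝ := Real.sqrt (∑ i, ((z i : ℝ)) ^ 2)

/-- Lattice ball `𝔹(x,r) = B(x,r) ∩ ℤ^d`. -/
def lball {d : ℕ} (x : Zd d) (r : ℝ) : Set (Zd d) := {y | eNorm (y - x) < r}

/-- `b(n) = |𝔹(0,n)|`. -/
def bvol (d : ℕ) (r : ℝ) : ℕ := (lball (0 : Zd d) r).ncard

/-- A vector of euclidean length one (a step of the simple random walk). -/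
def IsUnitStep {d : ℕ} (v : Zd d) : Prop := ∑ i, (v i) ^ 2 = 1

/-- `S` is a simple random walk on `ℤ^d` started at `x`, characterized through its
finite-dimensional distributions: every admissible nearest-neighbour path of length `t`
starting at `x` has probability `(1/(2d))^t`. -/
def IsSRW {d : ℕ} {Ω : Type*} [MeasurableSpace Ω] (P : Measure Ω)
    (x : Zd d) (S : ℕ → Ω → Zd d) : Prop :=
  (∀ t, Measurable (S t)) ∧
  ∀ (t : ℕ) (p : ℕ → Zd d), p 0 = x → (∀ s < t, IsUnitStep (p (s + 1) - p s)) →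
    P {ω | ∀ s ≤ t, S s ω = p s} = ENNReal.ofReal ((1 / (2 * (d : ℝ))) ^ t)

/-- The internal DLA cluster with initial explored region `Λ`, built from the
trajectories `w 0, w 1, …` (trajectory `w k` includes its starting point `w k 0`):
the `k`-th explorer settles at the first site of its trajectory outside the
current cluster. -/
def idla {d : ℕ} (Λ : Set (Zd d)) (w : ℕ → ℕ → Zd d) : ℕ → Set (Zd d)
  | 0 => Λ
  | k + 1 => idla Λ w k ∪ {w k (sInf {t | w k t ∉ idla Λ w k})}

/-- Inner error `δ_I(n)`. -/
def innerErr (d : ℕ) (w : ℕ → ℕ → Zd d) (n : ℕ) : ℝ :=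
  n - sSup {r : ℝ | 0 ≤ r ∧ lball 0 r ⊆ idla ∅ w (bvol d n)}

/-- Outer error `δ_O(n)`. -/
def outerErr (d : ℕ) (w : ℕ → ℕ → Zd d) (n : ℕ) : ℝ :=
  sInf {r : ℝ | 0 ≤ r ∧ idla ∅ w (bvol d n) ⊆ lball 0 r} - n

/-- The walks `W 0, W 1, …` are independent simple random walks all started at `x`. -/
def IIDWalks {d : ℕ} {Ω : Type*} [MeasurableSpace Ω] (P : Measure Ω)
    (x : Zd d) (W : ℕ → ℕ → Ω → Zd d) : Prop :=
  (∀ k, IsSRW P x (W k)) ∧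
  iIndepFun (fun k ω t => W k t ω) P


namespace IdlaTent
variable {d : ℕ}

lemma eNorm_nonneg (y : Zd d) : 0 ≤ eNorm y := Real.sqrt_nonneg _

lemma eNorm_sq (y : Zd d) : (eNorm y) ^ 2 = ∑ i, ((y i : ℝ)) ^ 2 :=
  Real.sq_sqrt (Finset.sum_nonneg fun i _ => sq_nonneg _)

lemma one_le_eNorm {y : Zd d} (hy : y ≠ 0) : 1 ≤ eNorm y := by
  obtain ⟨i, hi⟩ : ∃ i, y i ≠ 0 := by
    by_contra h; push_neg at h; exact hy (funext h)
  have h1 : (1 : ℝ) ≤ ((y i : ℝ)) ^ 2 := by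
    have : 1 ≤ |y i| := Int.one_le_abs hi
    have : (1 : ℝ) ≤ |((y i : ℝ))| := by exact_mod_cast this
    nlinarith [this, sq_abs ((y i : ℝ)), abs_nonneg ((y i : ℝ))]
  have h2 : (1 : ℝ) ≤ ∑ j, ((y j : ℝ)) ^ 2 :=
    h1.trans (Finset.single_le_sum (f := fun j => ((y j : ℝ))^2)
      (fun j _ => sq_nonneg _) (Finset.mem_univ i))
  calc (1:ℝ) = Real.sqrt 1 := (Real.sqrt_one).symm
  _ ≤ eNorm y := Real.sqrt_le_sqrt h2

/-- index of a coordinate of maximal square -/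
def gi [NeZero d] (y : Zd d) : Fin d :=
  if h : ∃ i : Fin d, ∀ j, (y j) ^ 2 ≤ (y i) ^ 2 then h.choose else default

lemma gi_spec [NeZero d] (y : Zd d) : ∀ j, (y j) ^ 2 ≤ (y (gi y)) ^ 2 := by
  have h : ∃ i : Fin d, ∀ j, (y j) ^ 2 ≤ (y i) ^ 2 := by
    obtain ⟨i, -, hi⟩ := Finset.exists_max_image Finset.univ (fun j => (y j) ^ 2)
      ⟨default, Finset.mem_univ _⟩
    exact ⟨i, fun j => hi j (Finset.mem_univ j)⟩
  rw [gi, dif_pos h]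
  exact h.choose_spec

def gstep [NeZero d] (y : Zd d) : Zd d :=
  fun j => if j = gi y then (if 0 ≤ y (gi y) then 1 else -1) else 0

lemma gstep_unit [NeZero d] (y : Zd d) : IsUnitStep (gstep y) := by
  unfold IsUnitStep gstep
  rw [Finset.sum_eq_single (gi y)]
  · by_cases h : (0:ℤ) ≤ y (gi y) <;> simp [h]
  · intro j _ hj; simp [hj]
  · intro h; exact absurd (Finset.mem_univ _) h

lemma eNorm_add_gstep [NeZero d] (y : Zd d) :
    eNorm y + 1 / Real.sqrt d ≤ eNorm (y + gstep y) := by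
  have hd0 : 0 < (d : ℝ) := by
    have := NeZero.pos d; exact_mod_cast this
  have hsd : 0 < Real.sqrt d := Real.sqrt_pos.2 hd0
  set i := gi y with hi
  set σ : ℤ := if 0 ≤ y i then 1 else -1 with hσ
  have hstep : ∀ j, (y + gstep y) j = if j = i then y i + σ else y j := by
    intro j; by_cases hj : j = i <;> simp [gstep, hj, ← hi, Pi.add_apply, hσ]
  -- sum computation
  have hsum : ∑ j, (((y + gstep y) j : ℝ)) ^ 2
      = (∑ j, ((y j : ℝ)) ^ 2) + 2 * |(y i : ℝ)| + 1 := by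
    have key : ∀ j, (((y + gstep y) j : ℝ)) ^ 2
        = ((y j : ℝ)) ^ 2 + (if j = i then 2 * |(y i : ℝ)| + 1 else 0) := by
      intro j
      rw [hstep j]
      by_cases hj : j = i
      · rw [if_pos hj, if_pos hj, hj]
        by_cases hpos : 0 ≤ y i
        · have habs : |(y i : ℝ)| = (y i : ℝ) := abs_of_nonneg (by exact_mod_cast hpos)
          rw [hσ, if_pos hpos]
          push_cast
          rw [habs]; ring
        · have habs : |(y i : ℝ)| = -(y i : ℝ) := abs_of_neg (by exact_mod_cast (not_le.1 hpos))
          rw [hσ, if_neg hpos]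
          push_cast
          rw [habs]; ring
      · simp [hj]
    rw [Finset.sum_congr rfl (fun j _ => key j), Finset.sum_add_distrib,
      Finset.sum_ite_eq' Finset.univ i, if_pos (Finset.mem_univ i)]
    ring
  -- max coordinate at least average
  have hmax : eNorm y / Real.sqrt d ≤ |(y i : ℝ)| := by
    have h1 : ∑ j, ((y j : ℝ)) ^ 2 ≤ d * ((y i : ℝ)) ^ 2 := by
      calc ∑ j, ((y j : ℝ)) ^ 2 ≤ ∑ _j : Fin d, ((y i : ℝ)) ^ 2 := by
            apply Finset.sum_le_sum
            intro j _
            have := gi_spec y j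
            exact_mod_cast this
      _ = d * ((y i : ℝ)) ^ 2 := by simp [mul_comm]
    have h2 : (eNorm y) ^ 2 ≤ (Real.sqrt d * |(y i : ℝ)|) ^ 2 := by
      rw [eNorm_sq, mul_pow, sq_abs, Real.sq_sqrt hd0.le]
      exact h1
    have h3 : eNorm y ≤ Real.sqrt d * |(y i : ℝ)| := by
      calc eNorm y = Real.sqrt (∑ j, ((y j : ℝ)) ^ 2) := rfl
      _ ≤ Real.sqrt (d * ((y i : ℝ)) ^ 2) := Real.sqrt_le_sqrt h1
      _ = Real.sqrt d * |(y i : ℝ)| := by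
          rw [Real.sqrt_mul hd0.le, Real.sqrt_sq_eq_abs]
    rw [div_le_iff₀ hsd]
    linarith [h3]
  -- conclude
  have hd1 : (1 : ℝ) ≤ d := by exact_mod_cast NeZero.pos d
  have hrpos : 0 ≤ eNorm y + 1 / Real.sqrt d :=
    add_nonneg (eNorm_nonneg y) (by positivity)
  have hsq : (eNorm y + 1 / Real.sqrt d) ^ 2 ≤ ∑ j, (((y + gstep y) j : ℝ)) ^ 2 := by
    rw [hsum, ← eNorm_sq y]
    have h1d : (1 / Real.sqrt d) ^ 2 = 1 / d := by
      rw [div_pow, one_pow, Real.sq_sqrt hd0.le]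
    have hinv : (1 : ℝ) / d ≤ 1 := by
      rw [div_le_one hd0]; exact hd1
    have h2 : eNorm y / Real.sqrt d ≤ |(y i : ℝ)| := hmax
    have hexp : (eNorm y + 1 / Real.sqrt d) ^ 2
        = eNorm y ^ 2 + 2 * (eNorm y / Real.sqrt d) + (1 / Real.sqrt d) ^ 2 := by
      ring
    rw [hexp, h1d]
    linarith
  calc eNorm y + 1 / Real.sqrt d
      = Real.sqrt ((eNorm y + 1 / Real.sqrt d) ^ 2) := (Real.sqrt_sq hrpos).symm
  _ ≤ Real.sqrt (∑ j, (((y + gstep y) j : ℝ)) ^ 2) := Real.sqrt_le_sqrt hsq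
  _ = eNorm (y + gstep y) := rfl


def gpath [NeZero d] (z : Zd d) : ℕ → Zd d
  | 0 => z
  | n + 1 => gpath z n + gstep (gpath z n)

lemma gpath_succ [NeZero d] (z : Zd d) (n : ℕ) :
    gpath z (n + 1) = gpath z n + gstep (gpath z n) := rfl

lemma gpath_step_unit [NeZero d] (z : Zd d) (n : ℕ) :
    IsUnitStep (gpath z (n + 1) - gpath z n) := by
  have h : gpath z (n + 1) - gpath z n = gstep (gpath z n) := by
    rw [gpath_succ]; abel
  rw [h]; exact gstep_unit _

lemma gpath_norm_le [NeZero d] (z : Zd d) (n : ℕ) :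
    eNorm z + n / Real.sqrt d ≤ eNorm (gpath z n) := by
  induction n with
  | zero => simp [gpath]
  | succ n ih =>
    have h := eNorm_add_gstep (gpath z n)
    have he : eNorm z + ((n : ℝ) + 1) / Real.sqrt d
        = (eNorm z + n / Real.sqrt d) + 1 / Real.sqrt d := by ring
    push_cast
    rw [he, gpath_succ]
    calc eNorm z + ↑n / Real.sqrt ↑d + 1 / Real.sqrt ↑d
        ≤ eNorm (gpath z n) + 1 / Real.sqrt d := by linarith
    _ ≤ _ := h

lemma gpath_norm_strictMono [NeZero d] (z : Zd d) :
    StrictMono (fun n => eNorm (gpath z n)) := by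
  apply strictMono_nat_of_lt_succ
  intro n
  show eNorm (gpath z n) < eNorm (gpath z (n + 1))
  have h := eNorm_add_gstep (gpath z n)
  have hd0 : 0 < (d : ℝ) := by exact_mod_cast NeZero.pos d
  have hpos : 0 < 1 / Real.sqrt d := by positivity
  rw [gpath_succ]
  linarith

lemma gpath_injective [NeZero d] (z : Zd d) : Function.Injective (gpath z) := by
  intro a b h
  exact (gpath_norm_strictMono z).injective (by simp [h])

lemma idla_succ (Λ : Set (Zd d)) (w : ℕ → ℕ → Zd d) (k : ℕ) :
    idla Λ w (k + 1) = idla Λ w k ∪ {w k (sInf {t | w k t ∉ idla Λ w k})} := rfl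

lemma idla_mono (Λ : Set (Zd d)) (w : ℕ → ℕ → Zd d) : Monotone (idla Λ w) :=
  monotone_nat_of_le_succ fun k => by rw [idla_succ]; exact Set.subset_union_left

lemma idla_eq_image {p : ℕ → Zd d} (hinj : Function.Injective p) {w : ℕ → ℕ → Zd d} {K : ℕ}
    (hw : ∀ k < K, ∀ s ≤ k, w k s = p s) : ∀ k ≤ K, idla ∅ w k = p '' Set.Iio k := by
  intro k
  induction k with
  | zero =>
    intro _
    have h0 : Set.Iio 0 = (∅ : Set ℕ) := by ext j; simp
    rw [h0, Set.image_empty]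
    rfl
  | succ k ih =>
    intro hk1
    have hkK : k < K := hk1
    have hik := ih (Nat.le_of_succ_le hk1)
    rw [idla_succ, hik]
    have hwk : ∀ s ≤ k, w k s = p s := hw k hkK
    have hmem : k ∈ {t | w k t ∉ p '' Set.Iio k} := by
      simp only [Set.mem_setOf_eq, hwk k le_rfl]
      rintro ⟨j, hj, hje⟩
      exact absurd (hinj hje) (Nat.ne_of_lt hj)
    have hinf : sInf {t | w k t ∉ p '' Set.Iio k} = k := by
      apply le_antisymm (Nat.sInf_le hmem)
      apply le_csInf ⟨k, hmem⟩
      intro t ht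
      by_contra hlt
      push_neg at hlt
      exact ht (by rw [hwk t hlt.le]; exact Set.mem_image_of_mem p hlt)
    rw [hinf, hwk k le_rfl]
    have hIio : Set.Iio (k + 1) = insert k (Set.Iio k) := by
      ext j
      simp only [Set.mem_Iio, Set.mem_insert_iff]
      omega
    rw [hIio, Set.image_insert_eq, Set.union_singleton]

lemma prob_event {Ω : Type} [MeasurableSpace Ω] (P : Measure Ω)
    (z : Zd d) (W : ℕ → ℕ → Ω → Zd d) (hW : IIDWalks P z W)
    (p : ℕ → Zd d) (hp0 : p 0 = z) (hstep : ∀ s, IsUnitStep (p (s + 1) - p s)) (K : ℕ) :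
    P {ω | ∀ k < K, ∀ s ≤ k, W k s ω = p s}
      = ENNReal.ofReal ((1 / (2 * (d : ℝ))) ^ (∑ k ∈ Finset.range K, k)) := by
  classical
  set sets : ℕ → Set (ℕ → Zd d) := fun k => {f | ∀ s ≤ k, f s = p s} with hsets
  have hms : ∀ k, MeasurableSet (sets k) := by
    intro k
    have : sets k = ⋂ (s : ℕ) (_ : s ≤ k), (fun f : ℕ → Zd d => f s) ⁻¹' {p s} := by
      ext f; simp [hsets]
    rw [this]
    exact MeasurableSet.iInter fun s => MeasurableSet.iInter fun _ =>
      (measurable_pi_apply s) (measurableSet_singleton _)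
  have hev : {ω | ∀ k < K, ∀ s ≤ k, W k s ω = p s}
      = ⋂ k ∈ Finset.range K, (fun ω t => W k t ω) ⁻¹' sets k := by
    ext ω; simp [hsets]
  rw [hev, hW.2.measure_inter_preimage_eq_mul (Finset.range K) (fun k _ => hms k)]
  have hfac : ∀ k, P ((fun ω t => W k t ω) ⁻¹' sets k)
      = ENNReal.ofReal ((1 / (2 * (d : ℝ))) ^ k) := by
    intro k
    have heq : (fun ω t => W k t ω) ⁻¹' sets k = {ω | ∀ s ≤ k, W k s ω = p s} := by
      ext ω; simp [hsets]
    rw [heq]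
    exact (hW.1 k).2 k p hp0 (fun s _ => hstep s)
  rw [Finset.prod_congr rfl (fun k _ => hfac k),
    ← ENNReal.ofReal_prod_of_nonneg (fun k _ => by positivity),
    Finset.prod_pow_eq_pow_sum]


end IdlaTent

open IdlaTent in
/-- tentacle-building, Step 2: for every `d ≥ 2` there is `c = c(d)`
such that for every `z ≠ 0`, every `H ≥ 1` and every integer `m ≥ cH`, the internal DLA
cluster built from `m` independent simple random walks started at `z` protrudes out of
`𝔹(0, ‖z‖ + H)` with probability at least `exp(−cH²)`. -/
theorem idla_tentacle_probability_lower_bound (d : ℕ) (hd : 2 ≤ d) :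
    ∃ c : ℝ, 0 < c ∧
      ∀ (Ω : Type) [MeasurableSpace Ω] (P : Measure Ω) [IsProbabilityMeasure P]
        (z : Zd d) (W : ℕ → ℕ → Ω → Zd d), IIDWalks P z W → z ≠ 0 →
        ∀ H : ℝ, 1 ≤ H → ∀ m : ℕ, c * H ≤ (m : ℝ) →
          ENNReal.ofReal (Real.exp (-c * H ^ 2)) ≤
            P {ω | (idla ∅ (fun k t => W k t ω) m ∩ (lball 0 (eNorm z + H))ᶜ).Nonempty} := by
  classical
  have hd0 : (0:ℝ) < d := by exact_mod_cast (by omega : 0 < d)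
  have hd2 : (2:ℝ) ≤ d := by exact_mod_cast hd
  have hsd : 0 < Real.sqrt d := Real.sqrt_pos.2 hd0
  set c : ℝ := (Real.sqrt d + 2) ^ 2 * Real.log (2 * d) with hc
  have hlog1 : 1 ≤ Real.log (2 * d) := by
    have h4 : (4:ℝ) ≤ 2 * d := by linarith
    have he : Real.exp 1 ≤ 2 * d := by
      have := Real.exp_one_lt_d9
      linarith
    calc (1:ℝ) = Real.log (Real.exp 1) := (Real.log_exp 1).symm
    _ ≤ Real.log (2 * d) := Real.log_le_log (Real.exp_pos 1) he
  have hc0 : 0 < c := mul_pos (by positivity) (by linarith)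
  refine ⟨c, hc0, ?_⟩
  intro Ω _ P _ z W hW hz H hH m hm
  haveI : NeZero d := ⟨by omega⟩
  set K : ℕ := ⌈Real.sqrt d * H⌉₊ + 1 with hK
  have hH0 : 0 < H := lt_of_lt_of_le one_pos hH
  have hKle : (K : ℝ) ≤ (Real.sqrt d + 2) * H := by
    have h1 : (⌈Real.sqrt d * H⌉₊ : ℝ) < Real.sqrt d * H + 1 :=
      Nat.ceil_lt_add_one (by positivity)
    rw [hK]
    push_cast
    nlinarith
  have hcge : Real.sqrt d + 2 ≤ c := by nlinarith [sq_nonneg (Real.sqrt d + 2)]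
  have hKm : K ≤ m := by
    have h2 : (K:ℝ) ≤ m := by nlinarith
    exact_mod_cast h2
  set p := IdlaTent.gpath z with hp
  have hpinj := IdlaTent.gpath_injective z
  set E : Set Ω := {ω | ∀ k < K, ∀ s ≤ k, W k s ω = p s} with hE
  have hsub : E ⊆ {ω | (idla ∅ (fun k t => W k t ω) m ∩ (lball 0 (eNorm z + H))ᶜ).Nonempty} := by
    intro ω hω
    have himg := IdlaTent.idla_eq_image hpinj (w := fun k t => W k t ω) (K := K) hω K le_rfl
    have hK1 : K - 1 < K := by omega
    have hmemK : p (K - 1) ∈ idla ∅ (fun k t => W k t ω) K := by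
      rw [himg]; exact ⟨K - 1, hK1, rfl⟩
    have hmemm : p (K - 1) ∈ idla ∅ (fun k t => W k t ω) m :=
      IdlaTent.idla_mono _ _ hKm hmemK
    refine ⟨p (K - 1), hmemm, ?_⟩
    intro hball
    have hnorm : eNorm z + (↑(K - 1)) / Real.sqrt d ≤ eNorm (p (K - 1)) :=
      IdlaTent.gpath_norm_le z (K - 1)
    have hKc : Real.sqrt d * H ≤ (↑(K - 1) : ℝ) := by
      have h3 : K - 1 = ⌈Real.sqrt d * H⌉₊ := by omega
      rw [h3]; exact Nat.le_ceil _
    have hge : eNorm z + H ≤ eNorm (p (K - 1)) := by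
      have h4 : H ≤ (↑(K - 1) : ℝ) / Real.sqrt d := by
        rw [le_div_iff₀ hsd]
        nlinarith
      linarith
    have hlt : eNorm (p (K - 1) - 0) < eNorm z + H := hball
    rw [sub_zero] at hlt
    linarith
  have hPE : P E = ENNReal.ofReal ((1 / (2 * (d:ℝ))) ^ (∑ k ∈ Finset.range K, k)) :=
    IdlaTent.prob_event P z W hW p rfl (IdlaTent.gpath_step_unit z) K
  calc ENNReal.ofReal (Real.exp (-c * H ^ 2)) ≤ P E := by
        rw [hPE]
        apply ENNReal.ofReal_le_ofReal
        set N := ∑ k ∈ Finset.range K, k with hN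
        have hq : (1 / (2 * (d:ℝ))) = Real.exp (-(Real.log (2 * d))) := by
          rw [Real.exp_neg, Real.exp_log (by linarith), one_div]
        rw [hq, ← Real.exp_nat_mul]
        apply Real.exp_le_exp.2
        have hNK : (N:ℝ) ≤ (K:ℝ) ^ 2 := by
          have h5 : N ≤ K * K := by
            calc N ≤ ∑ _k ∈ Finset.range K, K :=
                  Finset.sum_le_sum (fun k hk => (Finset.mem_range.1 hk).le)
            _ = K * K := by rw [Finset.sum_const, Finset.card_range, smul_eq_mul]
          calc (N:ℝ) ≤ ((K * K : ℕ) : ℝ) := by exact_mod_cast h5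
          _ = (K:ℝ) ^ 2 := by push_cast; ring
        have hK2 : (K:ℝ) ^ 2 ≤ ((Real.sqrt d + 2) * H) ^ 2 := by
          nlinarith [hKle, (Nat.cast_nonneg K : (0:ℝ) ≤ (K:ℝ))]
        have hfin : (N:ℝ) * Real.log (2 * d) ≤ c * H ^ 2 := by
          calc (N:ℝ) * Real.log (2 * d)
              ≤ ((Real.sqrt d + 2) * H) ^ 2 * Real.log (2 * d) :=
                mul_le_mul_of_nonneg_right (le_trans hNK hK2) (by linarith)
          _ = c * H ^ 2 := by rw [hc]; ring
        nlinarith [hfin]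
      _ ≤ P {ω | (idla ∅ (fun k t => W k t ω) m ∩ (lball 0 (eNorm z + H))ᶜ).Nonempty} :=
        measure_mono hsub


end
end
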